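/- Fix constants C, p > 1 and a bounded measurable set Ω ⊂ ℝⁿ of positive finite measure with finite diameter. Let X be a metric space and (f^k : Ω → X) a Lusin–Lipschitz admissible sequence with parameters λ_k = C·2^k and c_k = |Ω|·2^{−kp}: i.e. f^k is λ_k-Lipschitz and there are nonempty measurable sets E¹ ⊂ E² ⊂ ⋯ ⊂ Ω with |Ω \ E^k| ≤ c_k and f^{k+1} = f^k on E^k. Let f be the almost-everywhere pointwise limit and h_k = d(f, f^k). Then for every q with 1 < q < p, there is a constant C₀ (depending only on p, q, C and diam Ω) such that ∫_Ω h_k^q dz ≤ 2^{(q−p)k}·C₀ for every k, i.e. ‖h_k‖_{L^q(Ω)} decays geometrically in k. -/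

import Mathlib

open Filter MeasureTheory Set
open scoped ENNReal NNReal

/-- Quantitative `L^q` convergence of a Lusin–Lipschitz admissible
sequence with parameters `λ_k = C·2^k`, `c_k = |Ω|·2^{-kp}` to its limit: for
`1 < q < p` there is a constant `C₀` (depending only on `p, q, C` and `Ω`) such that
`∫_Ω d(f, f^k)^q ≤ 2^{(q-p)k}·C₀` for every `k`. -/
theorem lusin_lipschitz_Lq_decay {n : ℕ}
    (Ω : Set (EuclideanSpace ℝ (Fin n)))
    (hΩmeas : MeasurableSet Ω) (hΩb : Bornology.IsBounded Ω)
    (hΩpos : 0 < volume Ω) (hΩfin : volume Ω < ⊤)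
    (C p q : ℝ) (hC : 1 < C) (hq : 1 < q) (hqp : q < p) :
    ∃ C₀ > (0 : ℝ), ∀ (X : Type) [MetricSpace X]
      (f : ℕ → EuclideanSpace ℝ (Fin n) → X)
      (E : ℕ → Set (EuclideanSpace ℝ (Fin n)))
      (g : EuclideanSpace ℝ (Fin n) → X),
      (∀ k, MeasurableSet (E k)) → (∀ k, (E k).Nonempty) →
      (∀ k, E k ⊆ E (k + 1)) → (∀ k, E k ⊆ Ω) →
      -- measure parameters: |Ω \ E^k| ≤ |Ω| · 2^{-kp}
      (∀ k : ℕ, volume (Ω \ E k) ≤ volume Ω * ENNReal.ofReal (2 ^ (-(p * k)))) →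
      -- Lipschitz parameters: f^k is C·2^k-Lipschitz on Ω
      (∀ k : ℕ, ∀ x ∈ Ω, ∀ y ∈ Ω, dist (f k x) (f k y) ≤ C * 2 ^ (k : ℕ) * dist x y) →
      (∀ k, Set.EqOn (f (k + 1)) (f k) (E k)) →
      -- g is the pointwise limit: it agrees with f^k on E^k
      (∀ k, Set.EqOn g (f k) (E k)) →
      ∀ k : ℕ,
        (∫⁻ z in Ω, ENNReal.ofReal (dist (g z) (f k z) ^ q) ∂volume)
          ≤ ENNReal.ofReal (2 ^ ((q - p) * k) * C₀) := by
  have hC0 : (0:ℝ) < C := lt_trans one_pos hC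
  set D : ℝ := Metric.diam Ω + 1 with hD_def
  have hD : 0 < D := by have := Metric.diam_nonneg (s := Ω); linarith
  set r : ℝ := (2:ℝ) ^ (q - p) with hr_def
  have hr0 : 0 < r := Real.rpow_pos_of_pos two_pos _
  have hr1 : r < 1 := Real.rpow_lt_one_of_one_lt_of_neg one_lt_two (by linarith)
  have hV : 0 < (volume Ω).toReal := ENNReal.toReal_pos hΩpos.ne' hΩfin.ne
  have hq0 : (0:ℝ) < q := lt_trans one_pos hq
  refine ⟨(2*C*D)^q * (volume Ω).toReal * 2^q * (1 - r)⁻¹, ?_, ?_⟩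
  · have h1 : (0:ℝ) < (2*C*D)^q := Real.rpow_pos_of_pos (by positivity) _
    have h2 : (0:ℝ) < (2:ℝ)^q := Real.rpow_pos_of_pos two_pos _
    have h3 : (0:ℝ) < 1 - r := by linarith
    positivity
  classical
  intro X _ f E g hEmeas hEne hEmono hEΩ hmeaspar hlip hfeq hgeq k
  have hmono : Monotone E := monotone_nat_of_le_succ hEmono
  -- agreement of f i with f k on E k for i ≥ k
  have hagree : ∀ i, ∀ z ∈ E k, f (k + i) z = f k z := by
    intro i
    induction i with
    | zero => intro z _; rfl
    | succ i ih =>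
        intro z hz
        have hz' : z ∈ E (k + i) := hmono (Nat.le_add_right k i) hz
        calc f (k + (i+1)) z = f (k + i) z := hfeq (k+i) hz'
          _ = f k z := ih z hz
  -- key pointwise bound
  have hkey : ∀ i z, z ∈ E (k + i) → dist (g z) (f k z) ≤ 2 * C * 2 ^ (k + i) * D := by
    intro i z hz
    obtain ⟨y, hy⟩ := hEne k
    have hzΩ : z ∈ Ω := hEΩ _ hz
    have hyΩ : y ∈ Ω := hEΩ _ hy
    have hyE : y ∈ E (k + i) := hmono (Nat.le_add_right k i) hy
    have hdle : dist z y ≤ D := le_trans (Metric.dist_le_diam_of_mem hΩb hzΩ hyΩ) (by simp [hD_def])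
    have hdle' : dist y z ≤ D := by rwa [dist_comm]
    have h1 : dist (f (k+i) z) (f (k+i) y) ≤ C * 2 ^ (k+i) * D := by
      have := hlip (k+i) z hzΩ y hyΩ
      have h2 : C * 2 ^ (k+i) * dist z y ≤ C * 2 ^ (k+i) * D :=
        mul_le_mul_of_nonneg_left hdle (by positivity)
      linarith
    have h2 : dist (f k y) (f k z) ≤ C * 2 ^ k * D := by
      have := hlip k y hyΩ z hzΩ
      have h2 : C * 2 ^ k * dist y z ≤ C * 2 ^ k * D :=
        mul_le_mul_of_nonneg_left hdle' (by positivity)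
      linarith
    have hpow : (2:ℝ) ^ k ≤ 2 ^ (k+i) := pow_le_pow_right₀ one_le_two (Nat.le_add_right k i)
    calc dist (g z) (f k z) = dist (f (k+i) z) (f k z) := by rw [hgeq (k+i) hz]
      _ ≤ dist (f (k+i) z) (f (k+i) y) + dist (f (k+i) y) (f k z) := dist_triangle _ _ _
      _ = dist (f (k+i) z) (f (k+i) y) + dist (f k y) (f k z) := by rw [hagree i y hy]
      _ ≤ C * 2 ^ (k+i) * D + C * 2 ^ k * D := add_le_add h1 h2
      _ ≤ 2 * C * 2 ^ (k+i) * D := by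
          have := mul_le_mul_of_nonneg_right (mul_le_mul_of_nonneg_left hpow hC0.le) hD.le
          linarith
  -- definitions
  set B : ℕ → ℝ≥0∞ := fun i => ENNReal.ofReal ((2 * C * 2 ^ (k+1+i) * D) ^ q) with hB_def
  set φ : EuclideanSpace ℝ (Fin n) → ℝ≥0∞ :=
    fun z => ∑' i : ℕ, (Ω \ E (k+i)).indicator (fun _ => B i) z with hφ_def
  set N : EuclideanSpace ℝ (Fin n) → ℝ≥0∞ :=
    fun z => (Ω \ ⋃ i, E i).indicator (fun _ => (⊤:ℝ≥0∞)) z with hN_def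
  have hφmeas : Measurable φ :=
    Measurable.ennreal_tsum fun i => measurable_const.indicator (hΩmeas.diff (hEmeas _))
  have hnull : volume (Ω \ ⋃ i, E i) = 0 := by
    have hle : ∀ j : ℕ, volume (Ω \ ⋃ i, E i) ≤ volume Ω * ENNReal.ofReal (2 ^ (-(p * j))) :=
      fun j => le_trans (measure_mono (diff_subset_diff_right (subset_iUnion E j))) (hmeaspar j)
    have htend : Tendsto (fun j : ℕ => volume Ω * ENNReal.ofReal (2 ^ (-(p * j)))) atTop (nhds 0) := by
      have h1 : Tendsto (fun j : ℕ => (2:ℝ) ^ (-(p * j))) atTop (nhds 0) := by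
        have heq : ∀ j : ℕ, (2:ℝ) ^ (-(p * j)) = ((2:ℝ) ^ (-p)) ^ j := by
          intro j
          rw [← Real.rpow_natCast ((2:ℝ) ^ (-p)) j, ← Real.rpow_mul (by norm_num)]
          ring_nf
        simp only [heq]
        exact tendsto_pow_atTop_nhds_zero_of_lt_one
          (le_of_lt (Real.rpow_pos_of_pos two_pos _))
          (Real.rpow_lt_one_of_one_lt_of_neg one_lt_two (by linarith))
      have h2 := ENNReal.tendsto_ofReal h1
      simpa using ENNReal.Tendsto.const_mul h2 (Or.inr hΩfin.ne)
    have := ge_of_tendsto' htend hle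
    exact le_antisymm (by simpa using this) zero_le
  -- pointwise bound
  have hpoint : ∀ z ∈ Ω, ENNReal.ofReal (dist (g z) (f k z) ^ q) ≤ φ z + N z := by
    intro z hz
    by_cases hzU : z ∈ ⋃ i, E i
    · by_cases hzk : z ∈ E k
      · have h0 : dist (g z) (f k z) = 0 := by rw [hgeq k hzk]; simp
        simp [h0, Real.zero_rpow hq0.ne']
      · have hex : ∃ m, z ∈ E m := mem_iUnion.mp hzU
        have hm : z ∈ E (Nat.find hex) := Nat.find_spec hex
        have hmk : k < Nat.find hex := by
          by_contra h
          push_neg at h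
          exact hzk (hmono h hm)
        obtain ⟨i, hi⟩ : ∃ i, Nat.find hex = k + 1 + i := ⟨Nat.find hex - (k+1), by omega⟩
        have hznot : z ∉ E (k + i) := Nat.find_min hex (by omega)
        have hzE : z ∈ E (k + (1 + i)) := by rw [show k + (1+i) = k+1+i by ring, ← hi]; exact hm
        have hd : dist (g z) (f k z) ≤ 2 * C * 2 ^ (k+1+i) * D := by
          have := hkey (1+i) z hzE
          rwa [show k + (1+i) = k+1+i by ring] at this
        have hle1 : ENNReal.ofReal (dist (g z) (f k z) ^ q) ≤ B i :=
          ENNReal.ofReal_le_ofReal (Real.rpow_le_rpow dist_nonneg hd hq0.le)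
        have hle2 : B i ≤ φ z := by
          have := ENNReal.le_tsum (f := fun i => (Ω \ E (k+i)).indicator (fun _ => B i) z) i
          have hzd : z ∈ Ω \ E (k+i) := ⟨hz, hznot⟩
          rwa [Set.indicator_of_mem hzd] at this
        exact le_trans hle1 (le_trans hle2 (le_add_right le_rfl))
    · have hzd : z ∈ Ω \ ⋃ i, E i := ⟨hz, hzU⟩
      have : N z = ⊤ := Set.indicator_of_mem hzd _
      rw [this]
      simp
  -- integrate
  calc (∫⁻ z in Ω, ENNReal.ofReal (dist (g z) (f k z) ^ q) ∂volume)
      ≤ ∫⁻ z in Ω, (φ z + N z) ∂volume := setLIntegral_mono' hΩmeas hpoint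
    _ = (∫⁻ z in Ω, φ z ∂volume) + ∫⁻ z in Ω, N z ∂volume := lintegral_add_left hφmeas _
    _ = ∫⁻ z in Ω, φ z ∂volume := by
        have hS : MeasurableSet (Ω \ ⋃ i, E i) := hΩmeas.diff (MeasurableSet.iUnion hEmeas)
        have h1 : (∫⁻ z in Ω, N z ∂volume) ≤ ⊤ * (volume.restrict Ω) (Ω \ ⋃ i, E i) :=
          lintegral_indicator_const_le _ _
        have h2 : (volume.restrict Ω) (Ω \ ⋃ i, E i) = 0 := by
          rw [Measure.restrict_apply hS]
          exact le_antisymm (le_trans (measure_mono Set.inter_subset_left) hnull.le) zero_le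
        have h3 : (∫⁻ z in Ω, N z ∂volume) = 0 := by
          refine le_antisymm ?_ zero_le
          rw [h2, mul_zero] at h1
          exact h1
        rw [h3, add_zero]
    _ = ∑' i : ℕ, B i * volume (Ω \ E (k+i)) := by
        rw [hφ_def, lintegral_tsum fun i =>
          (measurable_const.indicator (hΩmeas.diff (hEmeas _))).aemeasurable]
        congr 1
        funext i
        rw [lintegral_indicator (hΩmeas.diff (hEmeas _)), setLIntegral_const,
          Measure.restrict_apply (hΩmeas.diff (hEmeas _)),
          Set.inter_eq_self_of_subset_left Set.diff_subset]
    _ ≤ ∑' i : ℕ, B i * (volume Ω * ENNReal.ofReal (2 ^ (-(p * ((k:ℝ)+(i:ℝ)))))) := by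
        refine ENNReal.tsum_le_tsum fun i => mul_le_mul_right ?_ _
        have := hmeaspar (k+i)
        rwa [show ((k+i : ℕ):ℝ) = (k:ℝ)+(i:ℝ) by push_cast; ring] at this
    _ = ∑' i : ℕ, volume Ω * (ENNReal.ofReal ((2*C*D)^q * 2^((q-p)*(k:ℝ)) * 2^q)
          * ENNReal.ofReal r ^ i) := by
        congr 1
        funext i
        have hA : (0:ℝ) ≤ (2*C*2^(k+1+i)*D)^q := Real.rpow_nonneg (by positivity) _
        have key2 : ((2*C*2^(k+1+i)*D))^q * 2^(-(p*((k:ℝ)+(i:ℝ))))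
            = (2*C*D)^q * 2^((q-p)*(k:ℝ)) * 2^q * r^i := by
          have h2 : ((2:ℝ)^(k+1+i):ℝ) = (2:ℝ)^(((k+1+i : ℕ)):ℝ) := (Real.rpow_natCast 2 _).symm
          have h3 : (r:ℝ)^i = (2:ℝ)^((q-p)*(i:ℝ)) := by
            rw [hr_def, ← Real.rpow_natCast ((2:ℝ)^(q-p)) i, ← Real.rpow_mul (by norm_num)]
          rw [show (2*C*2^(k+1+i)*D : ℝ) = (2*C*D) * 2^(k+1+i) by ring,
            Real.mul_rpow (by positivity) (by positivity), h2,
            ← Real.rpow_mul (by norm_num), h3]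
          rw [mul_assoc, ← Real.rpow_add two_pos, mul_assoc ((2*C*D)^q),
            mul_assoc ((2*C*D)^q), ← Real.rpow_add two_pos, ← Real.rpow_add two_pos]
          congr 2
          push_cast
          ring
        rw [hB_def]
        rw [mul_left_comm, ← ENNReal.ofReal_mul hA, key2,
          ENNReal.ofReal_mul (by positivity), ENNReal.ofReal_pow hr0.le]
    _ = volume Ω * (ENNReal.ofReal ((2*C*D)^q * 2^((q-p)*(k:ℝ)) * 2^q)
          * (1 - ENNReal.ofReal r)⁻¹) := by
        rw [ENNReal.tsum_mul_left, ENNReal.tsum_mul_left, ENNReal.tsum_geometric]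
    _ ≤ ENNReal.ofReal (2 ^ ((q - p) * k) * ((2*C*D)^q * (volume Ω).toReal * 2^q * (1 - r)⁻¹)) := by
        have h1r : (1:ℝ≥0∞) - ENNReal.ofReal r = ENNReal.ofReal (1 - r) := by
          rw [ENNReal.ofReal_sub _ hr0.le, ENNReal.ofReal_one]
        have hVeq : volume Ω = ENNReal.ofReal ((volume Ω).toReal) :=
          (ENNReal.ofReal_toReal hΩfin.ne).symm
        conv_lhs => rw [hVeq]
        rw [h1r, ← ENNReal.ofReal_inv_of_pos (by linarith),
          ← ENNReal.ofReal_mul (by positivity), ← ENNReal.ofReal_mul (by positivity)]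
        refine ENNReal.ofReal_le_ofReal (le_of_eq ?_)
        ring
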